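/- Let d ≥ 2 and let u ∈ [0,1]^d with u_i ≤ u_j whenever i ≤ j. Then for any d-copula C and any permutation π ∈ S_d: |C(u) − C(u_π)| ≤ Σ_{i = ⌈d/2⌉+1}^{d} (u_i − u_1), where ⌈a⌉ is the smallest integer n ≥ a. -/

import Mathlib

/-- A `d`-copula: a function `C : [0,1]^d → ℝ` (defined on all of `(Fin d → ℝ)`,
with the copula conditions imposed on `[0,1]^d`) that is grounded, has uniform
one-dimensional margins, and is `d`-increasing. -/
def IsCopula (d : ℕ) (C : (Fin d → ℝ) → ℝ) : Prop :=
  (∀ u : Fin d → ℝ, (∀ i, u i ∈ Set.Icc (0:ℝ) 1) → (∃ i, u i = 0) → C u = 0) ∧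
  (∀ u : Fin d → ℝ, (∀ i, u i ∈ Set.Icc (0:ℝ) 1) →
    ∀ i : Fin d, (∀ j, j ≠ i → u j = 1) → C u = u i) ∧
  (∀ a b : Fin d → ℝ, (∀ i, a i ∈ Set.Icc (0:ℝ) 1) → (∀ i, b i ∈ Set.Icc (0:ℝ) 1) →
    (∀ i, a i ≤ b i) →
    0 ≤ ∑ S : Finset (Fin d),
        (-1 : ℝ) ^ (d - S.card) * C (fun k => if k ∈ S then b k else a k))

open Finset

lemma copula_single_mono {d : ℕ} {C : (Fin d → ℝ) → ℝ} (hd : 2 ≤ d) (hC : IsCopula d C)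
    (x y : Fin d → ℝ) (hx : ∀ k, x k ∈ Set.Icc (0:ℝ) 1) (hy : ∀ k, y k ∈ Set.Icc (0:ℝ) 1)
    (i : Fin d) (hxy : ∀ k, k ≠ i → x k = y k) (hle : ∀ k, x k ≤ y k) :
    C x ≤ C y := by
  classical
  set a : Fin d → ℝ := fun k => if k = i then x i else 0 with ha
  have haI : ∀ k, a k ∈ Set.Icc (0:ℝ) 1 := by
    intro k; simp only [ha]; split
    · exact hx i
    · exact ⟨le_refl 0, zero_le_one⟩
  have hab : ∀ k, a k ≤ y k := by
    intro k; simp only [ha]; split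
    · next h => rw [h]; exact hle i
    · exact (hy k).1
  have hvol := hC.2.2 a y haI hy hab
  set f : Finset (Fin d) → ℝ :=
    fun S => (-1 : ℝ) ^ (d - S.card) * C (fun k => if k ∈ S then y k else a k) with hf
  have hzero : ∀ S ∈ (univ : Finset (Finset (Fin d))),
      S ∉ ({univ, univ.erase i} : Finset (Finset (Fin d))) → f S = 0 := by
    intro S _ hS
    simp only [mem_insert, mem_singleton] at hS
    push_neg at hS
    have hk : ∃ k, k ∉ S ∧ k ≠ i := by
      by_contra h
      push_neg at h
      apply hS.2
      ext k
      simp only [mem_erase, mem_univ, and_true]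
      constructor
      · intro hkS
        intro hki
        rw [hki] at hkS
        apply hS.1
        ext k'
        simp only [mem_univ, iff_true]
        by_cases hk' : k' = i
        · subst hk'; exact hkS
        · by_contra h'; exact hk' (h k' h')
      · intro hki
        by_contra h'
        exact hki (h k h')
    obtain ⟨k, hkS, hki⟩ := hk
    have : C (fun k' => if k' ∈ S then y k' else a k') = 0 := by
      apply hC.1
      · intro k'; split
        · exact hy k'
        · exact haI k'
      · exact ⟨k, by simp [hkS, ha, hki]⟩
    simp [hf, this]
  have hsum : ∑ S : Finset (Fin d), f S = f univ + f (univ.erase i) := by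
    rw [← Finset.sum_subset (Finset.subset_univ ({univ, univ.erase i} : Finset (Finset (Fin d))))
      (by intro S hS hS'; exact hzero S hS hS')]
    exact Finset.sum_pair (by
      intro h
      have : i ∈ univ.erase i := h ▸ mem_univ i
      simp at this)
  have hfu : f univ = C y := by
    simp [hf]
  have hfe : f (univ.erase i) = - C x := by
    have hcard : (univ.erase i).card = d - 1 := by
      rw [Finset.card_erase_of_mem (mem_univ i)]
      simp
    have hpt : (fun k => if k ∈ univ.erase i then y k else a k) = x := by
      funext k
      by_cases hk : k = i
      · subst hk; simp [ha]
      · simp [hk, ha, (hxy k hk).symm]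
    rw [hf]
    simp only [hcard, hpt]
    have : d - (d - 1) = 1 := by omega
    rw [this]
    ring
  rw [hsum, hfu, hfe] at hvol
  linarith

lemma copula_two_inc {d : ℕ} {C : (Fin d → ℝ) → ℝ} (hd : 2 ≤ d) (hC : IsCopula d C)
    (x : Fin d → ℝ) (hx : ∀ k, x k ∈ Set.Icc (0:ℝ) 1) (i j : Fin d) (hij : i ≠ j)
    (t q : ℝ) (hti : x i ≤ t) (ht1 : t ≤ 1) (hqj : x j ≤ q) (hq1 : q ≤ 1) :
    C (Function.update x i t) + C (Function.update x j q)
      ≤ C (Function.update (Function.update x i t) j q) + C x := by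
  classical
  set a : Fin d → ℝ := fun k => if k = i then x i else if k = j then x j else 0 with ha
  set b : Fin d → ℝ := Function.update (Function.update x i t) j q with hb
  have hbI : ∀ k, b k ∈ Set.Icc (0:ℝ) 1 := by
    intro k
    by_cases hk : k = j
    · rw [hk, hb, Function.update_self]
      exact ⟨le_trans (hx j).1 hqj, hq1⟩
    · by_cases hk2 : k = i
      · rw [hk2, hb, Function.update_of_ne hij, Function.update_self]
        exact ⟨le_trans (hx i).1 hti, ht1⟩
      · simp [hb, Function.update_of_ne hk, Function.update_of_ne hk2]
        exact hx k
  have haI : ∀ k, a k ∈ Set.Icc (0:ℝ) 1 := by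
    intro k; simp only [ha]
    split
    · exact hx i
    · split
      · exact hx j
      · exact ⟨le_refl 0, zero_le_one⟩
  have hab : ∀ k, a k ≤ b k := by
    intro k; simp only [ha]
    split
    · next h =>
      rw [h, hb, Function.update_of_ne hij, Function.update_self]
      exact hti
    · split
      · next _ h =>
        rw [h, hb, Function.update_self]
        exact hqj
      · next h1 h2 =>
        rw [hb, Function.update_of_ne h2, Function.update_of_ne h1]
        exact (hx k).1
  have hvol := hC.2.2 a b haI hbI hab
  set f : Finset (Fin d) → ℝ :=
    fun S => (-1 : ℝ) ^ (d - S.card) * C (fun k => if k ∈ S then b k else a k) with hf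
  -- the four relevant subsets
  set S4 : Finset (Finset (Fin d)) :=
    {univ, univ.erase i, univ.erase j, (univ.erase i).erase j} with hS4
  have hzero : ∀ S ∈ (univ : Finset (Finset (Fin d))), S ∉ S4 → f S = 0 := by
    intro S _ hS
    simp only [hS4, mem_insert, mem_singleton] at hS
    push_neg at hS
    have hk : ∃ k, k ∉ S ∧ k ≠ i ∧ k ≠ j := by
      by_contra h
      push_neg at h
      -- every k outside {i, j} is in S
      have hin : ∀ k, k ≠ i → k ≠ j → k ∈ S := by
        intro k hki hkj
        by_contra h'
        exact hkj (h k h' hki)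
      by_cases hiS : i ∈ S <;> by_cases hjS : j ∈ S
      · apply hS.1
        ext k; simp only [mem_univ, iff_true]
        by_cases hki : k = i
        · subst hki; exact hiS
        · by_cases hkj : k = j
          · subst hkj; exact hjS
          · exact hin k hki hkj
      · apply hS.2.2.1
        ext k; simp only [mem_erase, mem_univ, and_true]
        constructor
        · intro hkS hkj; rw [hkj] at hkS; exact hjS hkS
        · intro hkj
          by_cases hki : k = i
          · subst hki; exact hiS
          · exact hin k hki hkj
      · apply hS.2.1
        ext k; simp only [mem_erase, mem_univ, and_true]
        constructor
        · intro hkS hki; rw [hki] at hkS; exact hiS hkS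
        · intro hki
          by_cases hkj : k = j
          · subst hkj; exact hjS
          · exact hin k hki hkj
      · apply hS.2.2.2
        ext k; simp only [mem_erase, mem_univ, and_true]
        constructor
        · intro hkS
          constructor
          · intro hkj; rw [hkj] at hkS; exact hjS hkS
          · intro hki; rw [hki] at hkS; exact hiS hkS
        · intro ⟨hkj, hki⟩
          exact hin k hki hkj
    obtain ⟨k, hkS, hki, hkj⟩ := hk
    have : C (fun k' => if k' ∈ S then b k' else a k') = 0 := by
      apply hC.1
      · intro k'; split
        · exact hbI k'
        · exact haI k'
      · exact ⟨k, by simp [hkS, ha, hki, hkj]⟩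
    simp [hf, this]
  have hne1 : (univ : Finset (Fin d)) ≠ univ.erase i :=
    fun h => by have := h ▸ mem_univ i; simp at this
  have hne2 : (univ : Finset (Fin d)) ≠ univ.erase j :=
    fun h => by have := h ▸ mem_univ j; simp at this
  have hne3 : (univ : Finset (Fin d)) ≠ (univ.erase i).erase j :=
    fun h => by have := h ▸ mem_univ j; simp at this
  have hne4 : (univ : Finset (Fin d)).erase i ≠ univ.erase j := by
    intro h
    have : j ∈ univ.erase i := by simp [Ne.symm hij]
    rw [h] at this
    simp at this
  have hne5 : (univ : Finset (Fin d)).erase i ≠ (univ.erase i).erase j := by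
    intro h
    have : j ∈ univ.erase i := by simp [Ne.symm hij]
    rw [h] at this
    simp at this
  have hne6 : (univ : Finset (Fin d)).erase j ≠ (univ.erase i).erase j := by
    intro h
    have : i ∈ univ.erase j := by simp [hij]
    rw [h] at this
    simp at this
  have hsum : ∑ S : Finset (Fin d), f S
      = f univ + f (univ.erase i) + f (univ.erase j) + f ((univ.erase i).erase j) := by
    rw [← Finset.sum_subset (Finset.subset_univ S4)
      (by intro S hS hS'; exact hzero S hS hS')]
    rw [hS4]
    rw [Finset.sum_insert (by simp [hne1, hne2, hne3]),
        Finset.sum_insert (by simp [hne4, hne5]),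
        Finset.sum_pair hne6]
    ring
  have hcard_e : ∀ k : Fin d, (univ.erase k).card = d - 1 := by
    intro k; rw [Finset.card_erase_of_mem (mem_univ k)]; simp
  have hcard_e2 : ((univ.erase i).erase j).card = d - 2 := by
    rw [Finset.card_erase_of_mem (by simp [Ne.symm hij]), hcard_e i]
    omega
  have hfu : f univ = C b := by simp [hf]
  have hfi : f (univ.erase i) = - C (Function.update x j q) := by
    have hpt : (fun k => if k ∈ univ.erase i then b k else a k) = Function.update x j q := by
      funext k
      by_cases hki : k = i
      · subst hki
        simp [ha, Function.update_of_ne (fun h => hij h)]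
      · by_cases hkj : k = j
        · subst hkj
          simp [Ne.symm hij, hb, Function.update_self]
        · simp [hki, hkj, hb, Function.update_of_ne hkj, Function.update_of_ne hki]
    rw [hf]
    simp only [hcard_e i, hpt]
    have : d - (d - 1) = 1 := by omega
    rw [this]; ring
  have hfj : f (univ.erase j) = - C (Function.update x i t) := by
    have hpt : (fun k => if k ∈ univ.erase j then b k else a k) = Function.update x i t := by
      funext k
      by_cases hkj : k = j
      · subst hkj
        simp [ha, Ne.symm hij, Function.update_of_ne (Ne.symm hij)]
      · by_cases hki : k = i
        · subst hki
          simp [hij, hb, Function.update_of_ne (fun h => hij h), Function.update_self]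
        · simp [hki, hkj, hb, Function.update_of_ne hkj, Function.update_of_ne hki]
    rw [hf]
    simp only [hcard_e j, hpt]
    have : d - (d - 1) = 1 := by omega
    rw [this]; ring
  have hfij : f ((univ.erase i).erase j) = C x := by
    have hpt : (fun k => if k ∈ (univ.erase i).erase j then b k else a k) = x := by
      funext k
      by_cases hki : k = i
      · subst hki; simp [ha]
      · by_cases hkj : k = j
        · subst hkj; simp [ha, Ne.symm hij]
        · simp [hki, hkj, hb, Function.update_of_ne hkj, Function.update_of_ne hki]
    rw [hf]
    simp only [hcard_e2, hpt]
    have : d - (d - 2) = 2 := by omega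
    rw [this]; ring
  rw [hsum, hfu, hfi, hfj, hfij] at hvol
  rw [hb] at hvol ⊢
  linarith

lemma copula_single_lip {d : ℕ} {C : (Fin d → ℝ) → ℝ} (hd : 2 ≤ d) (hC : IsCopula d C)
    (x : Fin d → ℝ) (hx : ∀ k, x k ∈ Set.Icc (0:ℝ) 1) (i : Fin d)
    (t : ℝ) (hti : x i ≤ t) (ht1 : t ≤ 1) :
    C (Function.update x i t) - C x ≤ t - x i := by
  classical
  set X : Finset (Fin d) → (Fin d → ℝ) := fun T => fun k => if k ∈ T then 1 else x k with hX
  have hXI : ∀ T, ∀ k, X T k ∈ Set.Icc (0:ℝ) 1 := by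
    intro T k; simp only [hX]; split
    · exact ⟨zero_le_one, le_refl 1⟩
    · exact hx k
  set F : Finset (Fin d) → ℝ := fun T => C (Function.update (X T) i t) - C (X T) with hF
  have key : ∀ T : Finset (Fin d), i ∉ T → F ∅ ≤ F T := by
    intro T
    induction T using Finset.induction_on with
    | empty => intro _; exact le_refl _
    | @insert j T hjT ih =>
      intro hiT
      have hij : i ≠ j := by
        intro h; exact hiT (h ▸ Finset.mem_insert_self j T)
      have hiT' : i ∉ T := fun h => hiT (Finset.mem_insert_of_mem h)
      have hXi : X T i = x i := by simp [hX, hiT']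
      have step := copula_two_inc hd hC (X T) (hXI T) i j hij t 1
        (by rw [hXi]; exact hti) ht1 (by simp only [hX]; split; exact le_refl 1; exact (hx j).2)
        (le_refl 1)
      have e1 : Function.update (X T) j 1 = X (insert j T) := by
        funext k
        by_cases hk : k = j
        · subst hk; simp [hX]
        · simp [hX, Function.update_of_ne hk, hk]
      have e2 : Function.update (Function.update (X T) i t) j 1
          = Function.update (X (insert j T)) i t := by
        funext k
        by_cases hk : k = j
        · subst hk
          rw [Function.update_self, Function.update_of_ne (Ne.symm hij)]
          simp [hX]
        · by_cases hk2 : k = i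
          · subst hk2
            rw [Function.update_of_ne hij, Function.update_self, Function.update_self]
          · rw [Function.update_of_ne hk, Function.update_of_ne hk2,
              Function.update_of_ne hk2]
            simp [hX, hk]
      rw [e1, e2] at step
      have : F T ≤ F (insert j T) := by
        simp only [hF]
        linarith
      exact le_trans (ih hiT') this
  have hkey := key (univ.erase i) (by simp)
  have hXe : ∀ k, k ≠ i → X (univ.erase i) k = 1 := by
    intro k hk; simp [hX, hk]
  have hXei : X (univ.erase i) i = x i := by simp [hX]
  have hFe : F (univ.erase i) = t - x i := by
    have h1 : C (Function.update (X (univ.erase i)) i t) = t := by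
      have := hC.2.1 (Function.update (X (univ.erase i)) i t)
        (by intro k
            by_cases hk : k = i
            · rw [hk, Function.update_self]
              exact ⟨le_trans (hx i).1 hti, ht1⟩
            · rw [Function.update_of_ne hk, hXe k hk]
              exact ⟨zero_le_one, le_refl 1⟩)
        i (by intro k hk; rw [Function.update_of_ne hk]; exact hXe k hk)
      rwa [Function.update_self] at this
    have h2 : C (X (univ.erase i)) = x i := by
      have := hC.2.1 (X (univ.erase i)) (hXI _) i (fun k hk => hXe k hk)
      rwa [hXei] at this
    rw [hF]; simp only [h1, h2]
  have hFemp : F ∅ = C (Function.update x i t) - C x := by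
    have : X ∅ = x := by funext k; simp [hX]
    rw [hF]; simp only [this]
  rw [hFemp, hFe] at hkey
  exact hkey

lemma copula_mono_lip {d : ℕ} {C : (Fin d → ℝ) → ℝ} (hd : 2 ≤ d) (hC : IsCopula d C)
    (v w : Fin d → ℝ) (hv : ∀ k, v k ∈ Set.Icc (0:ℝ) 1) (hw : ∀ k, w k ∈ Set.Icc (0:ℝ) 1)
    (hvw : ∀ k, v k ≤ w k) :
    C v ≤ C w ∧ C w - C v ≤ ∑ k, (w k - v k) := by
  classical
  set X : Finset (Fin d) → (Fin d → ℝ) := fun T => fun k => if k ∈ T then w k else v k with hX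
  have hXI : ∀ T, ∀ k, X T k ∈ Set.Icc (0:ℝ) 1 := by
    intro T k; simp only [hX]; split
    · exact hw k
    · exact hv k
  have key : ∀ T : Finset (Fin d),
      C v ≤ C (X T) ∧ C (X T) - C v ≤ ∑ k ∈ T, (w k - v k) := by
    intro T
    induction T using Finset.induction_on with
    | empty =>
      have : X ∅ = v := by funext k; simp [hX]
      rw [this]; simp
    | @insert j T hjT ih =>
      have e1 : X (insert j T) = Function.update (X T) j (w j) := by
        funext k
        by_cases hk : k = j
        · subst hk; simp [hX]
        · simp [hX, Function.update_of_ne hk, hk]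
      have hXj : X T j = v j := by simp [hX, hjT]
      have hlip := copula_single_lip hd hC (X T) (hXI T) j (w j)
        (by rw [hXj]; exact hvw j) (hw j).2
      have hmono' : C (X T) ≤ C (Function.update (X T) j (w j)) := by
        apply copula_single_mono hd hC (X T) (Function.update (X T) j (w j)) (hXI T)
          (by intro k
              by_cases hk : k = j
              · rw [hk, Function.update_self]; exact hw j
              · rw [Function.update_of_ne hk]; exact hXI T k)
          j (fun k hk => (Function.update_of_ne hk _ _).symm)
        intro k
        by_cases hk : k = j
        · rw [hk, Function.update_self, hXj]; exact hvw j
        · rw [Function.update_of_ne hk]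
      rw [e1, Finset.sum_insert hjT]
      rw [hXj] at hlip
      exact ⟨le_trans ih.1 hmono', by linarith [ih.2]⟩
  have h := key univ
  have : X univ = w := by funext k; simp [hX]
  rw [this] at h
  simpa using h

lemma card_fin_filter {d : ℕ} (P : ℕ → Prop) [DecidablePred P] :
    (univ.filter (fun k : Fin d => P (k:ℕ))).card = ((range d).filter P).card := by
  rw [← Finset.card_image_of_injective (univ.filter (fun k : Fin d => P (k:ℕ))) Fin.val_injective]
  congr 1
  ext n
  simp only [Finset.mem_image, Finset.mem_filter, Finset.mem_range, Finset.mem_univ, true_and]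
  constructor
  · rintro ⟨k, hPk, rfl⟩
    exact ⟨k.isLt, hPk⟩
  · rintro ⟨hn, hPn⟩
    exact ⟨⟨n, hn⟩, hPn, rfl⟩

lemma card_filter_perm {d : ℕ} (π : Equiv.Perm (Fin d)) (P : Fin d → Prop) [DecidablePred P] :
    (univ.filter (fun k => P (π k))).card = (univ.filter P).card := by
  apply Finset.card_bij (fun k _ => π k)
  · intro k hk
    simp only [Finset.mem_filter, Finset.mem_univ, true_and] at *
    exact hk
  · intro k₁ _ k₂ _ h
    exact π.injective h
  · intro k hk
    simp only [Finset.mem_filter, Finset.mem_univ, true_and] at *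
    exact ⟨π.symm k, by simpa using hk, by simp⟩

/-- For `u` with nondecreasing coordinates:
`|C(u) − C(u_π)| ≤ Σ_{i = ⌈d/2⌉+1}^{d} (u_i − u_1)`.
Here (0-indexed) the sum runs over the indices `i` with `⌈d/2⌉ = (d+1)/2 ≤ i ≤ d − 1`. -/
theorem improved_bound (d : ℕ) (hd : 2 ≤ d)
    (u : Fin d → ℝ) (hu : ∀ i, u i ∈ Set.Icc (0:ℝ) 1)
    (hmono : ∀ i j : Fin d, i ≤ j → u i ≤ u j)
    (C : (Fin d → ℝ) → ℝ) (hC : IsCopula d C)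
    (π : Equiv.Perm (Fin d)) :
    |C u - C (u ∘ π)| ≤
      ∑ i ∈ Finset.univ.filter (fun i : Fin d => (d + 1) / 2 ≤ (i : ℕ)),
        (u i - u ⟨0, by omega⟩) := by
  classical
  set z : Fin d → ℝ := fun k => min (u k) (u (π k)) with hz
  have hzI : ∀ k, z k ∈ Set.Icc (0:ℝ) 1 :=
    fun k => ⟨le_min (hu k).1 (hu (π k)).1, le_trans (min_le_left _ _) (hu k).2⟩
  have huπ : ∀ k, (u ∘ π) k ∈ Set.Icc (0:ℝ) 1 := fun k => hu (π k)
  have h1 := copula_mono_lip hd hC z u hzI hu (fun k => min_le_left _ _)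
  have h2 := copula_mono_lip hd hC z (u ∘ π) hzI huπ (fun k => min_le_right _ _)
  set Ssum : ℝ := ∑ k, (u k - z k) with hS
  have hsum_eq : ∑ k, ((u ∘ π) k - z k) = Ssum := by
    rw [hS, Finset.sum_sub_distrib, Finset.sum_sub_distrib]
    congr 1
    exact Equiv.sum_comp π u
  have habs : |C u - C (u ∘ π)| ≤ Ssum := by
    rw [abs_sub_le_iff]
    constructor
    · linarith [h1.2, h2.1]
    · rw [← hsum_eq]
      linarith [h1.1, h2.2]
  refine le_trans habs ?_
  set m := (d + 1) / 2 with hm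
  set F : ℕ → ℝ := fun n => u ⟨min n (d-1), by omega⟩ with hF
  set g : ℕ → ℝ := fun n => F (n+1) - F n with hg
  have hgpos : ∀ n, 0 ≤ g n := by
    intro n
    simp only [hg, hF, sub_nonneg]
    apply hmono
    rw [Fin.mk_le_mk]
    omega
  have hFk : ∀ k : Fin d, F (k:ℕ) = u k := by
    intro k
    simp only [hF]
    congr 1
    apply Fin.ext
    simp only []
    omega
  have tele : ∀ a b : ℕ, a ≤ b → ∑ j ∈ Finset.Ico a b, g j = F b - F a := by
    intro a b hab
    rw [Finset.sum_Ico_eq_sub _ hab]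
    simp only [hg]
    rw [Finset.sum_range_sub (f := F), Finset.sum_range_sub (f := F)]
    ring
  have hfilter : ∀ (a b : ℕ), b ≤ d - 1 →
      (Finset.range (d-1)).filter (fun j => a ≤ j ∧ j < b) = Finset.Ico a b := by
    intro a b hb
    ext j
    simp only [Finset.mem_filter, Finset.mem_range, Finset.mem_Ico]
    omega
  have hSrw : Ssum = ∑ j ∈ Finset.range (d-1), ∑ k : Fin d,
      (if ((π k : ℕ) ≤ j ∧ j < (k:ℕ)) then g j else 0) := by
    rw [Finset.sum_comm, hS]
    apply Finset.sum_congr rfl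
    intro k _
    have hkd : (k:ℕ) ≤ d - 1 := by omega
    rw [← Finset.sum_filter, hfilter _ _ hkd]
    by_cases hp : (π k : ℕ) ≤ (k:ℕ)
    · have hzk : z k = u (π k) := min_eq_right (hmono (π k) k (by rwa [Fin.le_def]))
      rw [tele _ _ hp, hFk, hFk, hzk]
    · have hzk : z k = u k :=
        min_eq_left (hmono k (π k) (by rw [Fin.le_def]; omega))
      rw [Finset.Ico_eq_empty (by omega), Finset.sum_empty, hzk, sub_self]
  have hTrw : (∑ i ∈ Finset.univ.filter (fun i : Fin d => (d + 1) / 2 ≤ (i : ℕ)),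
        (u i - u ⟨0, by omega⟩))
      = ∑ j ∈ Finset.range (d-1), ∑ i ∈ Finset.univ.filter (fun i : Fin d => m ≤ (i : ℕ)),
          (if (0 ≤ j ∧ j < (i:ℕ)) then g j else 0) := by
    rw [Finset.sum_comm]
    apply Finset.sum_congr rfl
    intro i _
    have hid : (i:ℕ) ≤ d - 1 := by omega
    rw [← Finset.sum_filter, hfilter _ _ hid]
    rw [tele _ _ (Nat.zero_le _), hFk]
    have hF0 : F 0 = u ⟨0, by omega⟩ := by
      simp only [hF]
      congr 1
    rw [hF0]
  rw [hSrw, hTrw]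
  apply Finset.sum_le_sum
  intro j hj
  rw [Finset.mem_range] at hj
  -- left side: card smul
  have hL : ∑ k : Fin d, (if ((π k : ℕ) ≤ j ∧ j < (k:ℕ)) then g j else 0)
      = (univ.filter (fun k : Fin d => (π k : ℕ) ≤ j ∧ j < (k:ℕ))).card • g j := by
    rw [← Finset.sum_filter, Finset.sum_const]
  have hR : ∑ i ∈ Finset.univ.filter (fun i : Fin d => m ≤ (i : ℕ)),
        (if (0 ≤ j ∧ j < (i:ℕ)) then g j else 0)
      = (univ.filter (fun i : Fin d => m ≤ (i:ℕ) ∧ j < (i:ℕ))).card • g j := by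
    rw [Finset.sum_filter]
    have : ∀ i : Fin d, (if m ≤ (i:ℕ) then (if (0 ≤ j ∧ j < (i:ℕ)) then g j else 0) else 0)
        = (if (m ≤ (i:ℕ) ∧ j < (i:ℕ)) then g j else 0) := by
      intro i
      split_ifs with h1 h2 h3 h4 <;> first | rfl | omega
    rw [Finset.sum_congr rfl (fun i _ => this i), ← Finset.sum_filter, Finset.sum_const]
  rw [hL, hR]
  -- compare cards
  have hc1 : (univ.filter (fun k : Fin d => (π k : ℕ) ≤ j ∧ j < (k:ℕ))).card
      ≤ (univ.filter (fun k : Fin d => (π k : ℕ) ≤ j)).card := by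
    apply Finset.card_le_card
    intro k hk
    simp only [Finset.mem_filter] at *
    exact ⟨hk.1, hk.2.1⟩
  have hc2 : (univ.filter (fun k : Fin d => (π k : ℕ) ≤ j)).card = j + 1 := by
    rw [card_filter_perm π (fun k : Fin d => (k:ℕ) ≤ j), card_fin_filter (fun n => n ≤ j)]
    have : (range d).filter (fun n => n ≤ j) = range (j+1) := by
      ext n
      simp only [Finset.mem_filter, Finset.mem_range]
      omega
    rw [this, Finset.card_range]
  have hc3 : (univ.filter (fun k : Fin d => (π k : ℕ) ≤ j ∧ j < (k:ℕ))).card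
      ≤ (univ.filter (fun k : Fin d => j < (k:ℕ))).card := by
    apply Finset.card_le_card
    intro k hk
    simp only [Finset.mem_filter] at *
    exact ⟨hk.1, hk.2.2⟩
  have hc4 : (univ.filter (fun k : Fin d => j < (k:ℕ))).card = d - (j+1) := by
    rw [card_fin_filter (fun n => j < n)]
    have : (range d).filter (fun n => j < n) = Finset.Ico (j+1) d := by
      ext n
      simp only [Finset.mem_filter, Finset.mem_range, Finset.mem_Ico]
      omega
    rw [this, Nat.card_Ico]
  have hc5 : (univ.filter (fun i : Fin d => m ≤ (i:ℕ) ∧ j < (i:ℕ))).card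
      = d - max m (j+1) := by
    rw [card_fin_filter (fun n => m ≤ n ∧ j < n)]
    have : (range d).filter (fun n => m ≤ n ∧ j < n) = Finset.Ico (max m (j+1)) d := by
      ext n
      simp only [Finset.mem_filter, Finset.mem_range, Finset.mem_Ico]
      omega
    rw [this, Nat.card_Ico]
  have hcle : (univ.filter (fun k : Fin d => (π k : ℕ) ≤ j ∧ j < (k:ℕ))).card
      ≤ (univ.filter (fun i : Fin d => m ≤ (i:ℕ) ∧ j < (i:ℕ))).card := by
    rw [hc5]
    rw [hc2] at hc1
    rw [hc4] at hc3
    omega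
  rw [nsmul_eq_mul, nsmul_eq_mul]
  exact mul_le_mul_of_nonneg_right (by exact_mod_cast hcle) (hgpos j)
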